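/- Suppose there exists a real m×n matrix X₀ with rank(X₀) ≤ k and 𝒜(X₀) = b, where 𝒜 : ℝ^{m×n} → ℝ^p is linear and b ≠ 0. Then X₀ minimizes the function X ↦ ‖X‖_{k,2}^⋆ − ‖X‖_F over the set { X : 𝒜(X) = b }. -/

import Mathlib

open Matrix

theorem Matrix.isHermitian_transpose_mul_self {m n : Type*} [Fintype m]
    (A : Matrix m n ℝ) : (Aᵀ * A).IsHermitian := by
  simpa [Matrix.conjTranspose_eq_transpose_of_trivial] using
    Matrix.isHermitian_conjTranspose_mul_self A

/-- Singular values of a real `m × n` matrix, sorted in decreasing order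
(indexed by `Fin n`; `σ i = sqrt` of the `i`-th largest eigenvalue of `Aᵀ * A`). -/
noncomputable def svalsDesc {m n : ℕ} (A : Matrix (Fin m) (Fin n) ℝ) : Fin n → ℝ :=
  fun i =>
    Real.sqrt
      (((Matrix.isHermitian_transpose_mul_self A).eigenvalues ∘
        Tuple.sort (Matrix.isHermitian_transpose_mul_self A).eigenvalues) i.rev)

/-- Ky Fan 2-k-norm: `(∑_{i=1}^k σ_i(A)²)^{1/2}`. -/
noncomputable def kyFan2 {m n : ℕ} (k : ℕ) (A : Matrix (Fin m) (Fin n) ℝ) : ℝ :=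
  Real.sqrt (∑ i ∈ Finset.univ.filter (fun i : Fin n => (i : ℕ) < k), (svalsDesc A i) ^ 2)

/-- Frobenius inner ℝ product `⟨A, B⟩ = trace (Aᵀ B)`. -/
noncomputable def frobInner {m n : ℕ} (A B : Matrix (Fin m) (Fin n) ℝ) : ℝ :=
  ∑ i, ∑ j, A i j * B i j

/-- Frobenius norm. -/
noncomputable def frobNorm {m n : ℕ} (A : Matrix (Fin m) (Fin n) ℝ) : ℝ :=
  Real.sqrt (∑ i, ∑ j, (A i j) ^ 2)

/-- Dual Ky Fan 2-k-norm `‖A‖_{k,2}^⋆ = max {⟨A,X⟩ : ‖X‖_{k,2} ≤ 1}`. -/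
noncomputable def kyFan2Dual {m n : ℕ} (k : ℕ) (A : Matrix (Fin m) (Fin n) ℝ) : ℝ :=
  sSup {c : ℝ | ∃ X : Matrix (Fin m) (Fin n) ℝ, kyFan2 k X ≤ 1 ∧ c = frobInner A X}

/-- The linear map `𝒜` satisfies the restricted isometry inequality with constant `δ`
for all matrices of rank at most `r`. -/
def HasRIP {m n p : ℕ} (𝒜 : Matrix (Fin m) (Fin n) ℝ →ₗ[ℝ] EuclideanSpace ℝ (Fin p))
    (r : ℕ) (δ : ℝ) : Prop :=
  ∀ X : Matrix (Fin m) (Fin n) ℝ, X.rank ≤ r →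
    (1 - δ) * frobNorm X ≤ ‖𝒜 X‖ ∧ ‖𝒜 X‖ ≤ (1 + δ) * frobNorm X

/-! ### Auxiliary lemmas -/

section Aux

lemma inner_eq_sum' {n : ℕ} (x y : EuclideanSpace ℝ (Fin n)) :
    (inner ℝ x y : ℝ) = ∑ j, x j * y j := by
  simp [PiLp.inner_apply, RCLike.inner_apply, mul_comm]

/-- Quadratic form of `XᵀX` via the eigen decomposition. -/
lemma quad_eq' {m n : ℕ} (X : Matrix (Fin m) (Fin n) ℝ) (w : EuclideanSpace ℝ (Fin n)) :
    ∑ i, ((X *ᵥ (w : Fin n → ℝ)) i) ^ 2 =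
      ∑ j, (Matrix.isHermitian_transpose_mul_self X).eigenvalues j *
        (inner ℝ ((Matrix.isHermitian_transpose_mul_self X).eigenvectorBasis j) w : ℝ) ^ 2 := by
  set hM := Matrix.isHermitian_transpose_mul_self X with hMdef
  set u := hM.eigenvectorBasis with hu
  set lam := hM.eigenvalues with hlam
  set c : Fin n → ℝ := fun j => (inner ℝ (u j) w : ℝ) with hc
  have hcs : ∀ j, c j = ∑ l, u j l * w l := fun j => inner_eq_sum' _ _
  have hwp : ∀ l, (w : Fin n → ℝ) l = ∑ j, c j * u j l := by
    intro l
    have h0 : w = ∑ j, c j • u j := (u.sum_repr' w).symm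
    rw [h0]
    rw [WithLp.ofLp_sum]
    exact Finset.sum_apply l Finset.univ _
  have hMp : ∀ j l, ∑ t, (Xᴴ * X) l t * u j t = lam j * u j l := by
    intro j l
    have h := congrFun (hM.mulVec_eigenvectorBasis j) l
    exact h
  have h1 : ∑ i, ((X *ᵥ (w : Fin n → ℝ)) i) ^ 2
      = ∑ l, w l * (∑ t, (Xᴴ * X) l t * w t) := by
    simp only [Matrix.mulVec, dotProduct, Matrix.mul_apply, Matrix.conjTranspose_apply,
      star_trivial, Finset.sum_mul, Finset.mul_sum, sq]
    rw [Finset.sum_comm]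
    congr 1; ext l
    rw [Finset.sum_comm]
    congr 1; ext t
    congr 1; ext i
    ring
  rw [h1]
  have h2 : ∀ l, (∑ t, (Xᴴ * X) l t * w t) = ∑ j, c j * (lam j * u j l) := by
    intro l
    calc ∑ t, (Xᴴ * X) l t * w t = ∑ t, (Xᴴ * X) l t * ∑ j, c j * u j t := by
          refine Finset.sum_congr rfl fun t _ => by rw [← hwp t]
      _ = ∑ t, ∑ j, c j * ((Xᴴ * X) l t * u j t) := by
          refine Finset.sum_congr rfl fun t _ => ?_
          rw [Finset.mul_sum]
          exact Finset.sum_congr rfl fun j _ => by ring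
      _ = ∑ j, c j * ∑ t, (Xᴴ * X) l t * u j t := by
          rw [Finset.sum_comm]
          exact Finset.sum_congr rfl fun j _ => by rw [Finset.mul_sum]
      _ = ∑ j, c j * (lam j * u j l) :=
          Finset.sum_congr rfl fun j _ => by rw [hMp j l]
  calc ∑ l, w l * (∑ t, (Xᴴ * X) l t * w t)
      = ∑ l, ∑ j, c j * lam j * (u j l * w l) := by
        refine Finset.sum_congr rfl fun l _ => ?_
        rw [h2 l, Finset.mul_sum]
        exact Finset.sum_congr rfl fun j _ => by ring
    _ = ∑ j, c j * lam j * ∑ l, u j l * w l := by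
        rw [Finset.sum_comm]
        exact Finset.sum_congr rfl fun j _ => by rw [Finset.mul_sum]
    _ = ∑ j, lam j * c j ^ 2 := by
        refine Finset.sum_congr rfl fun j _ => ?_
        rw [← hcs j]; ring

/-- Rearrangement / LP lemma. -/
lemma lp_lemma' {n k : ℕ} (ν c : Fin n → ℝ) (hanti : Antitone ν) (hν : ∀ i, 0 ≤ ν i)
    (hc0 : ∀ i, 0 ≤ c i) (hc1 : ∀ i, c i ≤ 1) (hsum : ∑ i, c i ≤ (k : ℝ)) :
    ∑ i, ν i * c i ≤ ∑ i ∈ Finset.univ.filter (fun i : Fin n => (i : ℕ) < k), ν i := by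
  by_cases hkn : n ≤ k
  · have : Finset.univ.filter (fun i : Fin n => (i : ℕ) < k) = Finset.univ :=
      Finset.filter_true_of_mem fun i _ => lt_of_lt_of_le i.2 hkn
    rw [this]
    refine Finset.sum_le_sum fun i _ => ?_
    calc ν i * c i ≤ ν i * 1 := mul_le_mul_of_nonneg_left (hc1 i) (hν i)
      _ = ν i := mul_one _
  · push_neg at hkn
    set t := ν ⟨k, hkn⟩ with ht
    have ht0 : 0 ≤ t := hν _
    set S := Finset.univ.filter (fun i : Fin n => (i : ℕ) < k) with hS
    have hcard : S.card = k := by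
      have hSe : S = Finset.Iio (⟨k, hkn⟩ : Fin n) := by
        ext i; simp [hS, Finset.mem_Iio, Fin.lt_def]
      rw [hSe, Fin.card_Iio]
    have key : ∑ i, ν i * c i - ∑ i ∈ S, ν i ≤ t * (∑ i, c i - k) := by
      have hsplit : ∑ i, ν i * c i = ∑ i ∈ S, ν i * c i + ∑ i ∈ Sᶜ, ν i * c i :=
        (Finset.sum_add_sum_compl S _).symm
      have hcsplit : ∑ i, c i = ∑ i ∈ S, c i + ∑ i ∈ Sᶜ, c i :=
        (Finset.sum_add_sum_compl S _).symm
      have h1 : ∑ i ∈ S, (ν i * c i - ν i) ≤ ∑ i ∈ S, t * (c i - 1) := by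
        refine Finset.sum_le_sum fun i hi => ?_
        have hik : (i : ℕ) < k := (Finset.mem_filter.mp hi).2
        have hνit : t ≤ ν i := hanti (Fin.le_def.mpr (le_of_lt hik))
        have : c i - 1 ≤ 0 := by linarith [hc1 i]
        nlinarith
      have h2 : ∑ i ∈ Sᶜ, ν i * c i ≤ ∑ i ∈ Sᶜ, t * c i := by
        refine Finset.sum_le_sum fun i hi => ?_
        have hik : ¬ ((i : ℕ) < k) := by
          have := Finset.mem_compl.mp hi
          simpa [hS] using this
        have hνit : ν i ≤ t := hanti (Fin.le_def.mpr (le_of_not_gt hik))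
        nlinarith [hc0 i]
      have e1 : ∑ i ∈ S, (ν i * c i - ν i) = ∑ i ∈ S, ν i * c i - ∑ i ∈ S, ν i :=
        Finset.sum_sub_distrib _ _
      have e2a : ∑ i ∈ S, t * (c i - 1) = t * (∑ i ∈ S, c i - k) := by
        rw [← Finset.mul_sum, Finset.sum_sub_distrib]
        simp [hcard]
      have e2b : ∑ i ∈ Sᶜ, t * c i = t * ∑ i ∈ Sᶜ, c i := (Finset.mul_sum _ _ _).symm
      have e2 : ∑ i ∈ S, t * (c i - 1) + ∑ i ∈ Sᶜ, t * c i = t * (∑ i, c i - k) := by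
        rw [e2a, e2b, hcsplit]; ring
      linarith
    have : t * (∑ i, c i - k) ≤ 0 := by
      apply mul_nonpos_of_nonneg_of_nonpos ht0
      linarith
    linarith

/-- The sorting equivalence underlying `svalsDesc`. -/
noncomputable def sortEquiv' {m n : ℕ} (X : Matrix (Fin m) (Fin n) ℝ) : Fin n ≃ Fin n :=
  (Fin.revPerm).trans (Tuple.sort (Matrix.isHermitian_transpose_mul_self X).eigenvalues)

lemma eig_nonneg' {m n : ℕ} (X : Matrix (Fin m) (Fin n) ℝ) (j : Fin n) :
    0 ≤ (Matrix.isHermitian_transpose_mul_self X).eigenvalues j :=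
  (Matrix.posSemidef_conjTranspose_mul_self X).eigenvalues_nonneg j

lemma svals_sq' {m n : ℕ} (X : Matrix (Fin m) (Fin n) ℝ) (i : Fin n) :
    (svalsDesc X i) ^ 2
      = (Matrix.isHermitian_transpose_mul_self X).eigenvalues (sortEquiv' X i) := by
  rw [svalsDesc, Function.comp_apply, Real.sq_sqrt (eig_nonneg' X _)]
  rfl

lemma svals_sq_antitone' {m n : ℕ} (X : Matrix (Fin m) (Fin n) ℝ) :
    Antitone (fun i => (svalsDesc X i) ^ 2) := by
  intro i j hij
  simp only [svals_sq']
  exact Tuple.monotone_sort (Matrix.isHermitian_transpose_mul_self X).eigenvalues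
    (Fin.rev_le_rev.mpr hij)

lemma svals_sq_sum' {m n : ℕ} (X : Matrix (Fin m) (Fin n) ℝ) :
    ∑ i, (svalsDesc X i) ^ 2
      = ∑ j, (Matrix.isHermitian_transpose_mul_self X).eigenvalues j := by
  simp only [svals_sq']
  exact Equiv.sum_comp (sortEquiv' X) _

/-- Sum of eigenvalues of `XᵀX` is the squared Frobenius norm. -/
lemma eig_sum_eq_frob_sq {m n : ℕ} (X : Matrix (Fin m) (Fin n) ℝ) :
    ∑ j, (Matrix.isHermitian_transpose_mul_self X).eigenvalues j
      = ∑ i, ∑ j, (X i j) ^ 2 := by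
  set hM := Matrix.isHermitian_transpose_mul_self X
  set u := hM.eigenvectorBasis
  set lam := hM.eigenvalues
  have hq : ∀ j : Fin n, ∑ i, (X i j) ^ 2
      = ∑ t, lam t * (u t j) ^ 2 := by
    intro j
    have hes : ((EuclideanSpace.single j (1:ℝ)) : Fin n → ℝ) = Pi.single j 1 := rfl
    have h := quad_eq' X (EuclideanSpace.single j (1:ℝ))
    have hmv : ∀ i, (X *ᵥ ((EuclideanSpace.single j (1:ℝ)) : Fin n → ℝ)) i = X i j := by
      intro i
      show ∑ t, X i t * (Pi.single j (1:ℝ) : Fin n → ℝ) t = X i j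
      simp [Pi.single_apply]
    have hin : ∀ t, (inner ℝ (u t) (EuclideanSpace.single j (1:ℝ)) : ℝ) = u t j := by
      intro t
      rw [inner_eq_sum']
      show ∑ l, u t l * (Pi.single j (1:ℝ) : Fin n → ℝ) l = u t j
      simp [Pi.single_apply]
    calc ∑ i, (X i j) ^ 2 = ∑ i, ((X *ᵥ ((EuclideanSpace.single j (1:ℝ)) : Fin n → ℝ)) i) ^ 2 :=
          Finset.sum_congr rfl fun i _ => by rw [hmv i]
      _ = ∑ t, lam t * (inner ℝ (u t) (EuclideanSpace.single j (1:ℝ)) : ℝ) ^ 2 := h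
      _ = ∑ t, lam t * (u t j) ^ 2 :=
          Finset.sum_congr rfl fun t _ => by rw [hin t]
  have hnorm : ∀ t : Fin n, ∑ j, (u t j) ^ 2 = 1 := by
    intro t
    have h1 : (inner ℝ (u t) (u t) : ℝ) = ∑ j, u t j * u t j := inner_eq_sum' _ _
    have h2 : (inner ℝ (u t) (u t) : ℝ) = 1 := by
      rw [real_inner_self_eq_norm_sq, u.orthonormal.1 t]; norm_num
    calc ∑ j, (u t j) ^ 2 = ∑ j, u t j * u t j := by
          exact Finset.sum_congr rfl fun j _ => sq (u t j) ▸ (sq (u t j)).symm ▸ (by ring)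
      _ = 1 := by rw [← h1, h2]
  calc ∑ j, lam j = ∑ t, lam t * ∑ j, (u t j) ^ 2 := by
        refine Finset.sum_congr rfl fun t _ => by rw [hnorm t, mul_one]
    _ = ∑ t, ∑ j, lam t * (u t j) ^ 2 :=
        Finset.sum_congr rfl fun t _ => Finset.mul_sum _ _ _
    _ = ∑ j, ∑ t, lam t * (u t j) ^ 2 := Finset.sum_comm
    _ = ∑ j, ∑ i, (X i j) ^ 2 := Finset.sum_congr rfl fun j _ => (hq j).symm
    _ = ∑ i, ∑ j, (X i j) ^ 2 := Finset.sum_comm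

lemma svals_sq_sum_eq_frob_sq {m n : ℕ} (X : Matrix (Fin m) (Fin n) ℝ) :
    ∑ i, (svalsDesc X i) ^ 2 = ∑ i, ∑ j, (X i j) ^ 2 := by
  rw [svals_sq_sum', eig_sum_eq_frob_sq]

lemma frobNorm_nonneg {m n : ℕ} (X : Matrix (Fin m) (Fin n) ℝ) : 0 ≤ frobNorm X :=
  Real.sqrt_nonneg _

lemma kyFan2_nonneg {m n : ℕ} (k : ℕ) (X : Matrix (Fin m) (Fin n) ℝ) : 0 ≤ kyFan2 k X :=
  Real.sqrt_nonneg _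

lemma kyFan2_le_frobNorm {m n : ℕ} (k : ℕ) (X : Matrix (Fin m) (Fin n) ℝ) :
    kyFan2 k X ≤ frobNorm X := by
  rw [kyFan2, frobNorm]
  apply Real.sqrt_le_sqrt
  rw [← svals_sq_sum_eq_frob_sq]
  exact Finset.sum_le_sum_of_subset_of_nonneg (Finset.filter_subset _ _)
    fun i _ _ => sq_nonneg _

lemma kyFan2_sq {m n : ℕ} (k : ℕ) (X : Matrix (Fin m) (Fin n) ℝ) :
    (kyFan2 k X) ^ 2 = ∑ i ∈ Finset.univ.filter (fun i : Fin n => (i : ℕ) < k),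
      (svalsDesc X i) ^ 2 := by
  rw [kyFan2, Real.sq_sqrt]
  exact Finset.sum_nonneg fun i _ => sq_nonneg _

/-- Ky Fan type bound: orthonormal families of size ≤ k. -/
lemma kyfan_bound {m n k r : ℕ} (X : Matrix (Fin m) (Fin n) ℝ) (hr : r ≤ k)
    (v : Fin r → EuclideanSpace ℝ (Fin n)) (hv : Orthonormal ℝ v) :
    ∑ s, ∑ i, ((X *ᵥ (v s : Fin n → ℝ)) i) ^ 2
      ≤ ∑ i ∈ Finset.univ.filter (fun i : Fin n => (i : ℕ) < k), (svalsDesc X i) ^ 2 := by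
  set hM := Matrix.isHermitian_transpose_mul_self X
  set u := hM.eigenvectorBasis
  set lam := hM.eigenvalues
  set c : Fin n → ℝ := fun j => ∑ s, (inner ℝ (u j) (v s) : ℝ) ^ 2 with hc
  have h1 : ∑ s, ∑ i, ((X *ᵥ (v s : Fin n → ℝ)) i) ^ 2 = ∑ j, lam j * c j := by
    calc ∑ s, ∑ i, ((X *ᵥ (v s : Fin n → ℝ)) i) ^ 2
        = ∑ s, ∑ j, lam j * (inner ℝ (u j) (v s) : ℝ) ^ 2 :=
          Finset.sum_congr rfl fun s _ => quad_eq' X (v s)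
      _ = ∑ j, ∑ s, lam j * (inner ℝ (u j) (v s) : ℝ) ^ 2 := Finset.sum_comm
      _ = ∑ j, lam j * c j :=
          Finset.sum_congr rfl fun j _ => (Finset.mul_sum _ _ _).symm
  have hc0 : ∀ j, 0 ≤ c j := fun j => Finset.sum_nonneg fun s _ => sq_nonneg _
  have hc1 : ∀ j, c j ≤ 1 := by
    intro j
    have hb := hv.sum_inner_products_le (u j) (s := Finset.univ)
    calc c j = ∑ s, ‖(inner ℝ (v s) (u j) : ℝ)‖ ^ 2 := by
          refine Finset.sum_congr rfl fun s _ => ?_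
          rw [Real.norm_eq_abs, sq_abs, real_inner_comm]
      _ ≤ ‖u j‖ ^ 2 := hb
      _ = 1 := by rw [u.orthonormal.1 j]; norm_num
  have hcsum : ∑ j, c j ≤ (k : ℝ) := by
    have hpar : ∀ s, ∑ j, (inner ℝ (u j) (v s) : ℝ) ^ 2 = 1 := by
      intro s
      have h := u.sum_inner_mul_inner (v s) (v s)
      have h2 : (inner ℝ (v s) (v s) : ℝ) = 1 := by
        rw [real_inner_self_eq_norm_sq, hv.1 s]; norm_num
      calc ∑ j, (inner ℝ (u j) (v s) : ℝ) ^ 2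
          = ∑ j, (inner ℝ (v s) (u j) : ℝ) * (inner ℝ (u j) (v s) : ℝ) := by
            refine Finset.sum_congr rfl fun j _ => ?_
            rw [sq, real_inner_comm (u j) (v s)]
        _ = (inner ℝ (v s) (v s) : ℝ) := h
        _ = 1 := h2
    calc ∑ j, c j = ∑ s, ∑ j, (inner ℝ (u j) (v s) : ℝ) ^ 2 := Finset.sum_comm
      _ = ∑ s : Fin r, (1:ℝ) := Finset.sum_congr rfl fun s _ => hpar s
      _ = (r : ℝ) := by simp
      _ ≤ (k : ℝ) := by exact_mod_cast hr
  have hν : ∀ i, 0 ≤ (svalsDesc X i) ^ 2 := fun i => sq_nonneg _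
  have key : ∑ j, lam j * c j
      ≤ ∑ i ∈ Finset.univ.filter (fun i : Fin n => (i : ℕ) < k), (svalsDesc X i) ^ 2 := by
    have hre : ∑ j, lam j * c j
        = ∑ i, (svalsDesc X i) ^ 2 * c (sortEquiv' X i) := by
      rw [← Equiv.sum_comp (sortEquiv' X) (fun j => lam j * c j)]
      exact Finset.sum_congr rfl fun i _ => by rw [svals_sq']
    rw [hre]
    exact lp_lemma' _ _ (svals_sq_antitone' X) hν (fun i => hc0 _) (fun i => hc1 _)
      (by rw [Equiv.sum_comp (sortEquiv' X) c]; exact hcsum)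
  rw [h1]; exact key

/-- Cauchy–Schwarz for double sums. -/
lemma cs_double {m r : ℕ} (f g : Fin m → Fin r → ℝ) :
    ∑ i, ∑ s, f i s * g i s
      ≤ Real.sqrt (∑ i, ∑ s, (f i s) ^ 2) * Real.sqrt (∑ i, ∑ s, (g i s) ^ 2) := by
  have hcs := Finset.sum_mul_sq_le_sq_mul_sq (Finset.univ : Finset (Fin m × Fin r))
    (fun p => f p.1 p.2) (fun p => g p.1 p.2)
  have e1 : ∑ p : Fin m × Fin r, f p.1 p.2 * g p.1 p.2 = ∑ i, ∑ s, f i s * g i s :=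
    Fintype.sum_prod_type _
  have e2 : ∑ p : Fin m × Fin r, (f p.1 p.2) ^ 2 = ∑ i, ∑ s, (f i s) ^ 2 :=
    Fintype.sum_prod_type _
  have e3 : ∑ p : Fin m × Fin r, (g p.1 p.2) ^ 2 = ∑ i, ∑ s, (g i s) ^ 2 :=
    Fintype.sum_prod_type _
  rw [e1, e2, e3] at hcs
  have hnn : 0 ≤ ∑ i, ∑ s, (f i s) ^ 2 :=
    Finset.sum_nonneg fun i _ => Finset.sum_nonneg fun s _ => sq_nonneg _
  calc ∑ i, ∑ s, f i s * g i s ≤ |∑ i, ∑ s, f i s * g i s| := le_abs_self _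
    _ = Real.sqrt ((∑ i, ∑ s, f i s * g i s) ^ 2) := (Real.sqrt_sq_eq_abs _).symm
    _ ≤ Real.sqrt ((∑ i, ∑ s, (f i s) ^ 2) * ∑ i, ∑ s, (g i s) ^ 2) :=
        Real.sqrt_le_sqrt hcs
    _ = Real.sqrt (∑ i, ∑ s, (f i s) ^ 2) * Real.sqrt (∑ i, ∑ s, (g i s) ^ 2) :=
        Real.sqrt_mul hnn _

/-- Key inequality: if `rank X₀ ≤ k` then `⟨X₀, X⟩ ≤ ‖X₀‖_F * ‖X‖_{k,2}`. -/
lemma frobInner_le_key {m n k : ℕ} (X₀ X : Matrix (Fin m) (Fin n) ℝ) (hr : X₀.rank ≤ k) :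
    frobInner X₀ X ≤ frobNorm X₀ * kyFan2 k X := by
  classical
  set a : Fin m → EuclideanSpace ℝ (Fin n) := fun i => WithLp.toLp 2 (X₀ i) with ha
  set x : Fin m → EuclideanSpace ℝ (Fin n) := fun i => WithLp.toLp 2 (X i) with hx
  set W : Submodule ℝ (EuclideanSpace ℝ (Fin n)) :=
    Submodule.span ℝ (Set.range a) with hW
  set r := Module.finrank ℝ W with hrdef
  have hrk : r ≤ k := by
    have h1 : X₀.rank = Module.finrank ℝ (Submodule.span ℝ (Set.range X₀)) :=
      Matrix.rank_eq_finrank_span_row X₀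
    have h2 : r = X₀.rank := by
      have hra : Set.range a = ⇑((WithLp.linearEquiv 2 ℝ (Fin n → ℝ)).symm : (Fin n → ℝ) →ₗ[ℝ] EuclideanSpace ℝ (Fin n)) '' Set.range (fun i : Fin m => (X₀ i : Fin n → ℝ)) := by
        rw [← Set.range_comp]; rfl
      rw [h1, hrdef, hW, hra, Submodule.span_image]
      exact LinearEquiv.finrank_map_eq _ _
    omega
  set b := stdOrthonormalBasis ℝ W with hb
  set v : Fin r → EuclideanSpace ℝ (Fin n) := fun s => (b s : EuclideanSpace ℝ (Fin n)) with hvdef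
  have hv : Orthonormal ℝ v := b.orthonormal.comp_linearIsometry W.subtypeₗᵢ
  have hmem : ∀ i, a i ∈ W := fun i => Submodule.subset_span ⟨i, rfl⟩
  have hexp : ∀ (y : EuclideanSpace ℝ (Fin n)), y ∈ W →
      y = ∑ s, (inner ℝ (v s) y : ℝ) • v s := by
    intro y hy
    have h0 : (⟨y, hy⟩ : W) = ∑ s, (inner ℝ (b s) (⟨y, hy⟩ : W) : ℝ) • b s :=
      (b.sum_repr' ⟨y, hy⟩).symm
    have h1 := congrArg (Subtype.val) h0
    simpa [Submodule.coe_inner] using h1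
  set α : Fin m → Fin r → ℝ := fun i s => (inner ℝ (v s) (a i) : ℝ) with hα
  set β : Fin m → Fin r → ℝ := fun i s => (inner ℝ (v s) (x i) : ℝ) with hβ
  have hinner_exp : ∀ (y : EuclideanSpace ℝ (Fin n)) i,
      (inner ℝ (a i) y : ℝ) = ∑ s, α i s * (inner ℝ (v s) y : ℝ) := by
    intro y i
    conv_lhs => rw [hexp (a i) (hmem i)]
    rw [sum_inner]
    exact Finset.sum_congr rfl fun s _ => real_inner_smul_left _ _ _
  have hfi : frobInner X₀ X = ∑ i, ∑ s, α i s * β i s := by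
    rw [frobInner]
    refine Finset.sum_congr rfl fun i _ => ?_
    have e1 : ∑ j, X₀ i j * X i j = (inner ℝ (a i) (x i) : ℝ) :=
      (inner_eq_sum' (a i) (x i)).symm
    rw [e1, hinner_exp]
  have hαsum : ∑ i, ∑ s, (α i s) ^ 2 = ∑ i, ∑ j, (X₀ i j) ^ 2 := by
    refine Finset.sum_congr rfl fun i _ => ?_
    have e1 : (inner ℝ (a i) (a i) : ℝ) = ∑ s, α i s * α i s := hinner_exp (a i) i
    have e2 : (inner ℝ (a i) (a i) : ℝ) = ∑ j, X₀ i j * X₀ i j := inner_eq_sum' (a i) (a i)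
    calc ∑ s, (α i s) ^ 2 = ∑ s, α i s * α i s :=
          Finset.sum_congr rfl fun s _ => sq (α i s)
      _ = ∑ j, X₀ i j * X₀ i j := by rw [← e1, e2]
      _ = ∑ j, (X₀ i j) ^ 2 := Finset.sum_congr rfl fun j _ => (sq (X₀ i j)).symm
  have hβmv : ∀ i s, β i s = (X *ᵥ ((v s : EuclideanSpace ℝ (Fin n)) : Fin n → ℝ)) i := by
    intro i s
    rw [hβ]
    simp only []
    rw [inner_eq_sum']
    show ∑ j, v s j * X i j = ∑ j, X i j * v s j
    exact Finset.sum_congr rfl fun j _ => mul_comm _ _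
  have hβsum : ∑ i, ∑ s, (β i s) ^ 2 ≤ (kyFan2 k X) ^ 2 := by
    rw [kyFan2_sq]
    calc ∑ i, ∑ s, (β i s) ^ 2 = ∑ s, ∑ i, (β i s) ^ 2 := Finset.sum_comm
      _ = ∑ s, ∑ i, ((X *ᵥ ((v s : EuclideanSpace ℝ (Fin n)) : Fin n → ℝ)) i) ^ 2 :=
          Finset.sum_congr rfl fun s _ => Finset.sum_congr rfl fun i _ => by rw [hβmv i s]
      _ ≤ _ := kyfan_bound X hrk v hv
  calc frobInner X₀ X = ∑ i, ∑ s, α i s * β i s := hfi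
    _ ≤ Real.sqrt (∑ i, ∑ s, (α i s) ^ 2) * Real.sqrt (∑ i, ∑ s, (β i s) ^ 2) := cs_double α β
    _ ≤ frobNorm X₀ * kyFan2 k X := by
        have h1 : Real.sqrt (∑ i, ∑ s, (α i s) ^ 2) = frobNorm X₀ := by
          rw [hαsum, frobNorm]
        have h2 : Real.sqrt (∑ i, ∑ s, (β i s) ^ 2) ≤ kyFan2 k X := by
          calc Real.sqrt (∑ i, ∑ s, (β i s) ^ 2) ≤ Real.sqrt ((kyFan2 k X) ^ 2) :=
                Real.sqrt_le_sqrt hβsum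
            _ = kyFan2 k X := by rw [Real.sqrt_sq (kyFan2_nonneg k X)]
        rw [h1]
        exact mul_le_mul_of_nonneg_left h2 (frobNorm_nonneg X₀)

lemma frobNorm_smul {m n : ℕ} (c : ℝ) (X : Matrix (Fin m) (Fin n) ℝ) :
    frobNorm (c • X) = |c| * frobNorm X := by
  rw [frobNorm, frobNorm]
  have : ∑ i, ∑ j, ((c • X) i j) ^ 2 = c ^ 2 * ∑ i, ∑ j, (X i j) ^ 2 := by
    simp only [Matrix.smul_apply, smul_eq_mul, mul_pow, Finset.mul_sum]
  rw [this, Real.sqrt_mul (sq_nonneg c), Real.sqrt_sq_eq_abs]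

lemma zero_mem_dualset {m n k : ℕ} (A : Matrix (Fin m) (Fin n) ℝ) :
    (0:ℝ) ∈ {c : ℝ | ∃ X : Matrix (Fin m) (Fin n) ℝ, kyFan2 k X ≤ 1 ∧ c = frobInner A X} := by
  refine ⟨0, ?_, ?_⟩
  · have h1 : kyFan2 k (0 : Matrix (Fin m) (Fin n) ℝ) ≤ frobNorm (0 : Matrix (Fin m) (Fin n) ℝ) :=
      kyFan2_le_frobNorm _ _
    have h2 : frobNorm (0 : Matrix (Fin m) (Fin n) ℝ) = 0 := by
      rw [frobNorm]; simp
    linarith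
  · rw [frobInner]; simp

lemma dualset_bddAbove {m n k : ℕ} (hk1 : 1 ≤ k) (A : Matrix (Fin m) (Fin n) ℝ) :
    BddAbove {c : ℝ | ∃ X : Matrix (Fin m) (Fin n) ℝ, kyFan2 k X ≤ 1 ∧ c = frobInner A X} := by
  refine ⟨frobNorm A * Real.sqrt n, ?_⟩
  rintro c ⟨X, hX1, rfl⟩
  have hfX : frobNorm X ≤ Real.sqrt n := by
    rcases Nat.eq_zero_or_pos n with hn | hn
    · subst hn
      have : frobNorm X = 0 := by
        rw [frobNorm]
        simp
      rw [this]
      exact Real.sqrt_nonneg _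
    · -- frobNorm X ^2 = ∑ svals² ≤ n * svals 0 ² ≤ n
      have h0k : (0:ℕ) < k := hk1
      set i0 : Fin n := ⟨0, hn⟩ with hi0
      have hs0 : (svalsDesc X i0) ^ 2 ≤ 1 := by
        have hmem : i0 ∈ Finset.univ.filter (fun i : Fin n => (i : ℕ) < k) := by
          simp [hi0, h0k]
        have h1 : (svalsDesc X i0) ^ 2
            ≤ ∑ i ∈ Finset.univ.filter (fun i : Fin n => (i : ℕ) < k), (svalsDesc X i) ^ 2 :=
          Finset.single_le_sum (f := fun i => (svalsDesc X i) ^ 2)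
            (fun i _ => sq_nonneg _) hmem
        have h2 : ∑ i ∈ Finset.univ.filter (fun i : Fin n => (i : ℕ) < k), (svalsDesc X i) ^ 2
            = (kyFan2 k X) ^ 2 := (kyFan2_sq k X).symm
        have h3 : (kyFan2 k X) ^ 2 ≤ 1 := by
          nlinarith [kyFan2_nonneg k X]
        linarith
      have hsum : ∑ i, ∑ j, (X i j) ^ 2 ≤ (n : ℝ) := by
        rw [← svals_sq_sum_eq_frob_sq]
        calc ∑ i, (svalsDesc X i) ^ 2 ≤ ∑ _i : Fin n, (1:ℝ) := by
              refine Finset.sum_le_sum fun i _ => ?_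
              have : (svalsDesc X i) ^ 2 ≤ (svalsDesc X i0) ^ 2 :=
                svals_sq_antitone' X (by exact Fin.le_def.mpr (Nat.zero_le _))
              linarith
          _ = (n : ℝ) := by simp
      rw [frobNorm]
      exact Real.sqrt_le_sqrt hsum
  have hcs : frobInner A X ≤ frobNorm A * frobNorm X := by
    have h := cs_double (fun i j => A i j) (fun i j => X i j)
    rw [frobInner, frobNorm, frobNorm]
    exact h
  calc frobInner A X ≤ frobNorm A * frobNorm X := hcs
    _ ≤ frobNorm A * Real.sqrt n := mul_le_mul_of_nonneg_left hfX (frobNorm_nonneg A)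

lemma frobNorm_le_dual {m n k : ℕ} (hk1 : 1 ≤ k) (A : Matrix (Fin m) (Fin n) ℝ) :
    frobNorm A ≤ kyFan2Dual k A := by
  rw [kyFan2Dual]
  by_cases hA : frobNorm A = 0
  · rw [hA]
    exact le_csSup (dualset_bddAbove hk1 A) (zero_mem_dualset A)
  · have hApos : 0 < frobNorm A := lt_of_le_of_ne (frobNorm_nonneg A) (Ne.symm hA)
    apply le_csSup (dualset_bddAbove hk1 A)
    refine ⟨(frobNorm A)⁻¹ • A, ?_, ?_⟩
    · calc kyFan2 k ((frobNorm A)⁻¹ • A) ≤ frobNorm ((frobNorm A)⁻¹ • A) :=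
            kyFan2_le_frobNorm _ _
        _ = |(frobNorm A)⁻¹| * frobNorm A := frobNorm_smul _ _
        _ = 1 := by
            rw [abs_of_pos (inv_pos.mpr hApos)]
            field_simp
    · rw [frobInner]
      have : ∑ i, ∑ j, A i j * ((frobNorm A)⁻¹ • A) i j
          = (frobNorm A)⁻¹ * ∑ i, ∑ j, (A i j) ^ 2 := by
        simp only [Matrix.smul_apply, smul_eq_mul, Finset.mul_sum]
        exact Finset.sum_congr rfl fun i _ => Finset.sum_congr rfl fun j _ => by ring
      rw [this]
      have hsq : ∑ i, ∑ j, (A i j) ^ 2 = (frobNorm A) ^ 2 := by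
        rw [frobNorm, Real.sq_sqrt]
        exact Finset.sum_nonneg fun i _ => Finset.sum_nonneg fun j _ => sq_nonneg _
      rw [hsq]
      field_simp
  
lemma dual_le_frobNorm_of_rank_le {m n k : ℕ} (X₀ : Matrix (Fin m) (Fin n) ℝ)
    (hr : X₀.rank ≤ k) : kyFan2Dual k X₀ ≤ frobNorm X₀ := by
  rw [kyFan2Dual]
  apply csSup_le ⟨0, zero_mem_dualset X₀⟩
  rintro c ⟨X, hX1, rfl⟩
  calc frobInner X₀ X ≤ frobNorm X₀ * kyFan2 k X := frobInner_le_key X₀ X hr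
    _ ≤ frobNorm X₀ * 1 := mul_le_mul_of_nonneg_left hX1 (frobNorm_nonneg X₀)
    _ = frobNorm X₀ := mul_one _

end Aux

/-- a feasible matrix of rank ≤ k minimizes `‖X‖_{k,2}^⋆ − ‖X‖_F`
over `{X : 𝒜 X = b}`. -/
theorem lowrank_minimizes_diff {m n p k : ℕ} (hk1 : 1 ≤ k) (hk : k ≤ min m n)
    (𝒜 : Matrix (Fin m) (Fin n) ℝ →ₗ[ℝ] EuclideanSpace ℝ (Fin p))
    (b : EuclideanSpace ℝ (Fin p)) (hb : b ≠ 0)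
    (X₀ : Matrix (Fin m) (Fin n) ℝ) (hr : X₀.rank ≤ k) (hA : 𝒜 X₀ = b) :
    ∀ X : Matrix (Fin m) (Fin n) ℝ, 𝒜 X = b →
      kyFan2Dual k X₀ - frobNorm X₀ ≤ kyFan2Dual k X - frobNorm X := by
  intro X _
  have h1 : kyFan2Dual k X₀ - frobNorm X₀ ≤ 0 := by
    have := dual_le_frobNorm_of_rank_le X₀ hr
    linarith
  have h2 : 0 ≤ kyFan2Dual k X - frobNorm X := by
    have := frobNorm_le_dual hk1 X
    linarith
  linarith
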